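/- Let A = [[B, C],[C*, D]] be an n×n Hermitian matrix with B invertible. Then the number of positive eigenvalues of A equals the number of positive eigenvalues of B plus the number of positive eigenvalues of the Schur complement D − C*B⁻¹C; similarly for negative eigenvalues. -/

import Mathlib

open Matrix

namespace InertiaAux
open Finset Module

variable {n : Type*} [Fintype n] [DecidableEq n]

noncomputable def qf (M : Matrix n n ℂ) (x : n → ℂ) : ℝ := (star x ⬝ᵥ M *ᵥ x).re

lemma qf_zero (M : Matrix n n ℂ) : qf M 0 = 0 := by simp [qf]

lemma master (M R : Matrix n n ℂ) (hR : IsUnit R) (μ : n → ℝ)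
    (hM : M = Rᴴ * diagonal (fun i => (μ i : ℂ)) * R) (p : ℝ → Prop) [DecidablePred p] :
    ∃ V : Submodule ℂ (n → ℂ),
      Module.finrank ℂ V = (Finset.univ.filter fun i => p (μ i)).card ∧
      ∀ x ∈ V, x ≠ 0 → ∃ y : n → ℂ, y ≠ 0 ∧ (∀ i, ¬ p (μ i) → y i = 0) ∧
        qf M x = ∑ i, μ i * Complex.normSq (y i) := by
  haveI := hR.invertible
  set e : (n → ℂ) ≃ₗ[ℂ] (n → ℂ) := R.toLinearEquiv' hR.invertible with he_def
  have he : ∀ x, e x = R *ᵥ x := by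
    intro x
    have : (e : (n → ℂ) →ₗ[ℂ] (n → ℂ)) = Matrix.toLin' R :=
      Matrix.toLinearEquiv'_apply R _
    calc e x = (e : (n → ℂ) →ₗ[ℂ] (n → ℂ)) x := rfl
      _ = Matrix.toLin' R x := by rw [this]
      _ = R *ᵥ x := Matrix.toLin'_apply R x
  set fL : (n → ℂ) →ₗ[ℂ] ({i : n // ¬ p (μ i)} → ℂ) :=
    LinearMap.funLeft ℂ ℂ (fun j : {i : n // ¬ p (μ i)} => (j : n)) with hfL
  set K : Submodule ℂ (n → ℂ) := LinearMap.ker fL with hK_def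
  have hmemK : ∀ y : n → ℂ, y ∈ K ↔ ∀ i, ¬ p (μ i) → y i = 0 := by
    intro y
    rw [hK_def, LinearMap.mem_ker]
    constructor
    · intro h i hi
      exact congrFun h ⟨i, hi⟩
    · intro h
      funext j
      exact h j.1 j.2
  have hrankK : finrank ℂ K = (Finset.univ.filter fun i => p (μ i)).card := by
    have h1 := LinearMap.finrank_range_add_finrank_ker fL
    have h2 : LinearMap.range fL = ⊤ :=
      LinearMap.range_eq_top.2
        (LinearMap.funLeft_surjective_of_injective ℂ ℂ _ Subtype.val_injective)
    rw [h2, finrank_top] at h1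
    rw [Module.finrank_pi, Module.finrank_pi] at h1
    have h3 : Fintype.card {i : n // ¬ p (μ i)}
        = (Finset.univ.filter fun i => ¬ p (μ i)).card := Fintype.card_subtype _
    have h4 : (Finset.univ.filter fun i => p (μ i)).card
        + (Finset.univ.filter fun i => ¬ p (μ i)).card = Fintype.card n := by
      rw [Finset.card_filter_add_card_filter_not]
      exact Finset.card_univ
    rw [h3] at h1
    rw [show LinearMap.ker fL = K from hK_def.symm] at h1
    omega
  refine ⟨K.comap (e : (n → ℂ) →ₗ[ℂ] (n → ℂ)), ?_, ?_⟩
  · rw [Submodule.comap_equiv_eq_map_symm, LinearEquiv.finrank_map_eq, hrankK]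
  · intro x hx hx0
    refine ⟨R *ᵥ x, ?_, ?_, ?_⟩
    · rw [← he]
      simp only [ne_eq, LinearEquiv.map_eq_zero_iff]
      exact hx0
    · have := (hmemK (e x)).1 hx
      rwa [he] at this
    · -- q computation
      rw [qf, hM]
      rw [Matrix.mul_assoc, ← Matrix.mulVec_mulVec, ← Matrix.mulVec_mulVec]
      rw [Matrix.dotProduct_mulVec, ← Matrix.star_mulVec]
      have : star (R *ᵥ x) ⬝ᵥ (diagonal (fun i => (μ i : ℂ)) *ᵥ (R *ᵥ x))
          = ∑ i, ((μ i : ℂ) * Complex.normSq ((R *ᵥ x) i)) := by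
        rw [dotProduct]
        refine Finset.sum_congr rfl fun i _ => ?_
        rw [Matrix.mulVec_diagonal]
        simp only [Pi.star_apply, Complex.star_def]
        rw [← Complex.mul_conj]
        ring
      rw [this]
      rw [Complex.re_sum]
      refine Finset.sum_congr rfl fun i _ => ?_
      rw [← Complex.ofReal_mul, Complex.ofReal_re]


lemma pos_subspace (M R : Matrix n n ℂ) (hR : IsUnit R) (μ : n → ℝ)
    (hM : M = Rᴴ * diagonal (fun i => (μ i : ℂ)) * R) :
    ∃ V : Submodule ℂ (n → ℂ),
      Module.finrank ℂ V = (Finset.univ.filter fun i => 0 < μ i).card ∧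
      ∀ x ∈ V, x ≠ 0 → 0 < qf M x := by
  obtain ⟨V, hV1, hV2⟩ := master M R hR μ hM (fun a => 0 < a)
  refine ⟨V, hV1, fun x hx hx0 => ?_⟩
  obtain ⟨y, hy0, hysupp, hq⟩ := hV2 x hx hx0
  rw [hq]
  obtain ⟨j, hj⟩ := Function.ne_iff.1 hy0
  refine Finset.sum_pos' (fun i _ => ?_) ⟨j, Finset.mem_univ j, ?_⟩
  · by_cases h : 0 < μ i
    · exact mul_nonneg h.le (Complex.normSq_nonneg _)
    · rw [hysupp i h]; simp
  · have hμj : 0 < μ j := by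
      by_contra h
      exact hj (hysupp j h)
    exact mul_pos hμj (by simpa [Complex.normSq_pos] using hj)

lemma nonpos_subspace (M R : Matrix n n ℂ) (hR : IsUnit R) (μ : n → ℝ)
    (hM : M = Rᴴ * diagonal (fun i => (μ i : ℂ)) * R) :
    ∃ W : Submodule ℂ (n → ℂ),
      Module.finrank ℂ W = (Finset.univ.filter fun i => ¬ 0 < μ i).card ∧
      ∀ x ∈ W, qf M x ≤ 0 := by
  obtain ⟨W, hW1, hW2⟩ := master M R hR μ hM (fun a => ¬ 0 < a)
  refine ⟨W, hW1, fun x hx => ?_⟩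
  by_cases hx0 : x = 0
  · rw [hx0, qf_zero]
  obtain ⟨y, hy0, hysupp, hq⟩ := hW2 x hx hx0
  rw [hq]
  refine Finset.sum_nonpos fun i _ => ?_
  by_cases h : 0 < μ i
  · rw [hysupp i (by simpa using h)]; simp
  · exact mul_nonpos_of_nonpos_of_nonneg (not_lt.1 h) (Complex.normSq_nonneg _)

lemma neg_subspace (M R : Matrix n n ℂ) (hR : IsUnit R) (μ : n → ℝ)
    (hM : M = Rᴴ * diagonal (fun i => (μ i : ℂ)) * R) :
    ∃ V : Submodule ℂ (n → ℂ),
      Module.finrank ℂ V = (Finset.univ.filter fun i => μ i < 0).card ∧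
      ∀ x ∈ V, x ≠ 0 → qf M x < 0 := by
  obtain ⟨V, hV1, hV2⟩ := master M R hR μ hM (fun a => a < 0)
  refine ⟨V, hV1, fun x hx hx0 => ?_⟩
  obtain ⟨y, hy0, hysupp, hq⟩ := hV2 x hx hx0
  rw [hq]
  obtain ⟨j, hj⟩ := Function.ne_iff.1 hy0
  refine Finset.sum_neg' (fun i _ => ?_) ⟨j, Finset.mem_univ j, ?_⟩
  · by_cases h : μ i < 0
    · exact mul_nonpos_of_nonpos_of_nonneg h.le (Complex.normSq_nonneg _)
    · rw [hysupp i h]; simp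
  · have hμj : μ j < 0 := by
      by_contra h
      exact hj (hysupp j h)
    exact mul_neg_of_neg_of_pos hμj (by simpa [Complex.normSq_pos] using hj)

lemma nonneg_subspace (M R : Matrix n n ℂ) (hR : IsUnit R) (μ : n → ℝ)
    (hM : M = Rᴴ * diagonal (fun i => (μ i : ℂ)) * R) :
    ∃ W : Submodule ℂ (n → ℂ),
      Module.finrank ℂ W = (Finset.univ.filter fun i => ¬ μ i < 0).card ∧
      ∀ x ∈ W, 0 ≤ qf M x := by
  obtain ⟨W, hW1, hW2⟩ := master M R hR μ hM (fun a => ¬ a < 0)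
  refine ⟨W, hW1, fun x hx => ?_⟩
  by_cases hx0 : x = 0
  · rw [hx0, qf_zero]
  obtain ⟨y, hy0, hysupp, hq⟩ := hW2 x hx hx0
  rw [hq]
  refine Finset.sum_nonneg fun i _ => ?_
  by_cases h : μ i < 0
  · rw [hysupp i (by simpa using h)]; simp
  · exact mul_nonneg (not_lt.1 h) (Complex.normSq_nonneg _)

lemma disjoint_dims (M : Matrix n n ℂ) (V W : Submodule ℂ (n → ℂ))
    (hV : ∀ x ∈ V, x ≠ 0 → 0 < qf M x) (hW : ∀ x ∈ W, qf M x ≤ 0) :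
    finrank ℂ V + finrank ℂ W ≤ Fintype.card n := by
  have hinf : V ⊓ W = ⊥ := by
    rw [Submodule.eq_bot_iff]
    rintro x ⟨hxV, hxW⟩
    by_contra hx0
    exact absurd (hW x hxW) (not_le.2 (hV x hxV hx0))
  have h := Submodule.finrank_sup_add_finrank_inf_eq V W
  rw [hinf] at h
  simp only [finrank_bot, add_zero] at h
  rw [← h]
  calc finrank ℂ ↥(V ⊔ W) ≤ finrank ℂ (n → ℂ) := Submodule.finrank_le _
    _ = Fintype.card n := Module.finrank_pi ℂ

lemma count_pos_le (M R₁ R₂ : Matrix n n ℂ) (hR₁ : IsUnit R₁) (hR₂ : IsUnit R₂)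
    (μ ν : n → ℝ) (h₁ : M = R₁ᴴ * diagonal (fun i => (μ i : ℂ)) * R₁)
    (h₂ : M = R₂ᴴ * diagonal (fun i => (ν i : ℂ)) * R₂) :
    (Finset.univ.filter fun i => 0 < μ i).card ≤ (Finset.univ.filter fun i => 0 < ν i).card := by
  obtain ⟨V, hV1, hV2⟩ := pos_subspace M R₁ hR₁ μ h₁
  obtain ⟨W, hW1, hW2⟩ := nonpos_subspace M R₂ hR₂ ν h₂
  have h := disjoint_dims M V W hV2 hW2
  rw [hV1, hW1] at h
  have h4 : (Finset.univ.filter fun i => 0 < ν i).card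
      + (Finset.univ.filter fun i => ¬ 0 < ν i).card = Fintype.card n := by
    rw [Finset.card_filter_add_card_filter_not]
    exact Finset.card_univ
  omega

lemma count_neg_le (M R₁ R₂ : Matrix n n ℂ) (hR₁ : IsUnit R₁) (hR₂ : IsUnit R₂)
    (μ ν : n → ℝ) (h₁ : M = R₁ᴴ * diagonal (fun i => (μ i : ℂ)) * R₁)
    (h₂ : M = R₂ᴴ * diagonal (fun i => (ν i : ℂ)) * R₂) :
    (Finset.univ.filter fun i => μ i < 0).card ≤ (Finset.univ.filter fun i => ν i < 0).card := by
  obtain ⟨V, hV1, hV2⟩ := neg_subspace M R₁ hR₁ μ h₁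
  obtain ⟨W, hW1, hW2⟩ := nonneg_subspace M R₂ hR₂ ν h₂
  have h : finrank ℂ V + finrank ℂ W ≤ Fintype.card n := by
    have hinf : V ⊓ W = ⊥ := by
      rw [Submodule.eq_bot_iff]
      rintro x ⟨hxV, hxW⟩
      by_contra hx0
      exact absurd (hW2 x hxW) (not_le.2 (hV2 x hxV hx0))
    have h := Submodule.finrank_sup_add_finrank_inf_eq V W
    rw [hinf] at h
    simp only [finrank_bot, add_zero] at h
    rw [← h]
    calc finrank ℂ ↥(V ⊔ W) ≤ finrank ℂ (n → ℂ) := Submodule.finrank_le _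
      _ = Fintype.card n := Module.finrank_pi ℂ
  rw [hV1, hW1] at h
  have h4 : (Finset.univ.filter fun i => ν i < 0).card
      + (Finset.univ.filter fun i => ¬ ν i < 0).card = Fintype.card n := by
    rw [Finset.card_filter_add_card_filter_not]
    exact Finset.card_univ
  omega

lemma count_eq (M R₁ R₂ : Matrix n n ℂ) (hR₁ : IsUnit R₁) (hR₂ : IsUnit R₂)
    (μ ν : n → ℝ) (h₁ : M = R₁ᴴ * diagonal (fun i => (μ i : ℂ)) * R₁)
    (h₂ : M = R₂ᴴ * diagonal (fun i => (ν i : ℂ)) * R₂) :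
    ((Finset.univ.filter fun i => 0 < μ i).card = (Finset.univ.filter fun i => 0 < ν i).card)
    ∧ ((Finset.univ.filter fun i => μ i < 0).card
        = (Finset.univ.filter fun i => ν i < 0).card) :=
  ⟨le_antisymm (count_pos_le M R₁ R₂ hR₁ hR₂ μ ν h₁ h₂)
      (count_pos_le M R₂ R₁ hR₂ hR₁ ν μ h₂ h₁),
    le_antisymm (count_neg_le M R₁ R₂ hR₁ hR₂ μ ν h₁ h₂)
      (count_neg_le M R₂ R₁ hR₂ hR₁ ν μ h₂ h₁)⟩

lemma card_filter_sum {α β : Type*} [Fintype α] [Fintype β] (p : α ⊕ β → Prop)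
    [DecidablePred p] :
    (Finset.univ.filter p).card
      = (Finset.univ.filter fun a => p (Sum.inl a)).card
        + (Finset.univ.filter fun b => p (Sum.inr b)).card := by
  classical
  rw [← Fintype.card_subtype, ← Fintype.card_subtype, ← Fintype.card_subtype, ← Fintype.card_sum]
  exact Fintype.card_congr Equiv.subtypeSum

/-- Any Hermitian matrix is congruent to the diagonal of its eigenvalues. -/
lemma herm_diag_rep (M : Matrix n n ℂ) (hM : M.IsHermitian) :
    ∃ R : Matrix n n ℂ, IsUnit R ∧
      M = Rᴴ * diagonal (fun i => (hM.eigenvalues i : ℂ)) * R := by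
  set U : Matrix n n ℂ := (hM.eigenvectorUnitary : Matrix n n ℂ) with hU
  have h1 : U * star U = 1 := Matrix.mem_unitaryGroup_iff.mp hM.eigenvectorUnitary.2
  have h2 : star U * U = 1 := Matrix.mem_unitaryGroup_iff'.mp hM.eigenvectorUnitary.2
  refine ⟨star U, isUnit_iff_exists.2 ⟨U, h2, h1⟩, ?_⟩
  have heq : (star U)ᴴ = U := by
    rw [← Matrix.star_eq_conjTranspose, star_star]
  rw [heq]
  exact hM.spectral_theorem

end InertiaAux


theorem eigenvalue_counts_block {k m : ℕ}
    (B : Matrix (Fin k) (Fin k) ℂ) (C : Matrix (Fin k) (Fin m) ℂ)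
    (D : Matrix (Fin m) (Fin m) ℂ) (hB : B.IsHermitian) (hD : D.IsHermitian)
    (hBinv : IsUnit B)
    (hA : (Matrix.fromBlocks B C Cᴴ D).IsHermitian)
    (hS : (D - Cᴴ * B⁻¹ * C).IsHermitian) :
    ((Finset.univ.filter fun i => 0 < hA.eigenvalues i).card
        = (Finset.univ.filter fun i => 0 < hB.eigenvalues i).card
          + (Finset.univ.filter fun i => 0 < hS.eigenvalues i).card)
    ∧ ((Finset.univ.filter fun i => hA.eigenvalues i < 0).card
        = (Finset.univ.filter fun i => hB.eigenvalues i < 0).card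
          + (Finset.univ.filter fun i => hS.eigenvalues i < 0).card) := by
  classical
  haveI := hBinv.invertible
  obtain ⟨R₁, hR₁u, hR₁⟩ := InertiaAux.herm_diag_rep B hB
  obtain ⟨R₂, hR₂u, hR₂⟩ := InertiaAux.herm_diag_rep _ hS
  obtain ⟨R₀, hR₀u, hR₀⟩ := InertiaAux.herm_diag_rep _ hA
  set P : Matrix (Fin k ⊕ Fin m) (Fin k ⊕ Fin m) ℂ := fromBlocks 1 (B⁻¹ * C) 0 1 with hP
  set W : Matrix (Fin k ⊕ Fin m) (Fin k ⊕ Fin m) ℂ := fromBlocks R₁ 0 0 R₂ with hW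
  have hPH : Pᴴ = fromBlocks 1 0 (Cᴴ * B⁻¹) 1 := by
    rw [hP, fromBlocks_conjTranspose]
    simp [conjTranspose_mul, Matrix.conjTranspose_nonsing_inv, hB.eq]
  have hdecomp : fromBlocks B C Cᴴ D
      = Pᴴ * fromBlocks B 0 0 (D - Cᴴ * B⁻¹ * C) * P := by
    rw [hPH, hP]
    have h := Matrix.fromBlocks_eq_of_invertible₁₁ B C Cᴴ D
    rw [invOf_eq_nonsing_inv] at h
    exact h
  have hN : fromBlocks B 0 0 (D - Cᴴ * B⁻¹ * C)
      = Wᴴ * diagonal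
          (fun i => ((Sum.elim hB.eigenvalues hS.eigenvalues i : ℝ) : ℂ)) * W := by
    have hdiag : diagonal
        (fun i : Fin k ⊕ Fin m => ((Sum.elim hB.eigenvalues hS.eigenvalues i : ℝ) : ℂ))
        = fromBlocks (diagonal fun i => (hB.eigenvalues i : ℂ)) 0 0
            (diagonal fun i => (hS.eigenvalues i : ℂ)) := by
      rw [fromBlocks_diagonal]
      congr 1
      funext i
      cases i <;> rfl
    rw [hdiag, hW, fromBlocks_conjTranspose]
    simp only [fromBlocks_multiply, conjTranspose_zero, Matrix.mul_zero, Matrix.zero_mul,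
      add_zero, zero_add]
    rw [← hR₁, ← hR₂]
  have hAeq : fromBlocks B C Cᴴ D
      = (W * P)ᴴ * diagonal
          (fun i => ((Sum.elim hB.eigenvalues hS.eigenvalues i : ℝ) : ℂ)) * (W * P) := by
    rw [conjTranspose_mul, hdecomp, hN]
    simp only [Matrix.mul_assoc]
  have hWu : IsUnit W := by
    rw [Matrix.isUnit_iff_isUnit_det, hW, det_fromBlocks_zero₂₁]
    exact ((Matrix.isUnit_iff_isUnit_det _).mp hR₁u).mul
      ((Matrix.isUnit_iff_isUnit_det _).mp hR₂u)
  have hPu : IsUnit P := by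
    rw [Matrix.isUnit_iff_isUnit_det, hP, det_fromBlocks_zero₂₁]
    simp
  obtain ⟨hpos, hneg⟩ := InertiaAux.count_eq (fromBlocks B C Cᴴ D) R₀ (W * P) hR₀u
    (hWu.mul hPu) hA.eigenvalues (Sum.elim hB.eigenvalues hS.eigenvalues) hR₀ hAeq
  constructor
  · rw [hpos, InertiaAux.card_filter_sum]
    simp only [Sum.elim_inl, Sum.elim_inr]
    congr
  · rw [hneg, InertiaAux.card_filter_sum]
    simp only [Sum.elim_inl, Sum.elim_inr]
    congr
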